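/- Let φ: ℝⁿ → ℝ be convex and C² on an open convex set containing the segment [x,y], and suppose ‖∇²φ(z)‖ ≤ M for all z on this segment (operator norm w.r.t. a Euclidean norm induced by B ≻ 0). Then ‖∇φ(x) − ∇φ(y)‖* ² ≤ M ⟨∇φ(x) − ∇φ(y), x − y⟩. -/

import Mathlib

open RealInnerProductSpace

set_option maxHeartbeats 1000000 in
/-- Cocoercivity-type inequality (Lemma 1): if `φ` is convex and C² on an open convex set
containing the segment `[x,y]`, with `‖∇²φ(z)‖ ≤ M` along the segment, then
`‖∇φ(x) − ∇φ(y)‖² ≤ M ⟨∇φ(x) − ∇φ(y), x − y⟩`. -/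
theorem gradient_cocoercivity {n : ℕ}
    (φ : EuclideanSpace ℝ (Fin n) → ℝ)
    (s : Set (EuclideanSpace ℝ (Fin n))) (hs : IsOpen s) (hsc : Convex ℝ s)
    (x y : EuclideanSpace ℝ (Fin n)) (hseg : segment ℝ x y ⊆ s)
    (hC2 : ContDiffOn ℝ 2 φ s)
    (hconv : ConvexOn ℝ s φ)
    (M : ℝ)
    (hM : ∀ z ∈ segment ℝ x y, ‖fderiv ℝ (fun w => gradient φ w) z‖ ≤ M) :
    ‖gradient φ x - gradient φ y‖ ^ 2
      ≤ M * ⟪gradient φ x - gradient φ y, x - y⟫ := by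
  have hφdiff : DifferentiableOn ℝ φ s := hC2.differentiableOn (by norm_num)
  have hf1 : ContDiffOn ℝ 1 (fderiv ℝ φ) s := hC2.fderiv_of_isOpen (m := 1) hs (by norm_num)
  have hfd : DifferentiableOn ℝ (fderiv ℝ φ) s := hf1.differentiableOn (by norm_num)
  set f'' : EuclideanSpace ℝ (Fin n) → EuclideanSpace ℝ (Fin n) →L[ℝ] EuclideanSpace ℝ (Fin n) →L[ℝ] ℝ := fun z => fderiv ℝ (fderiv ℝ φ) z with hf''def
  have hf''At : ∀ z ∈ s, HasFDerivAt (fderiv ℝ φ) (f'' z) z := fun z hz =>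
    ((hfd z hz).differentiableAt (hs.mem_nhds hz)).hasFDerivAt
  set H : EuclideanSpace ℝ (Fin n) → EuclideanSpace ℝ (Fin n) →L[ℝ] EuclideanSpace ℝ (Fin n) := fun z => fderiv ℝ (fun w => gradient φ w) z with hHdef
  have hgradAt : ∀ z ∈ s, HasFDerivAt (fun w => gradient φ w)
      (((InnerProductSpace.toDual ℝ (EuclideanSpace ℝ (Fin n))).symm.toContinuousLinearEquiv :
          (EuclideanSpace ℝ (Fin n) →L[ℝ] ℝ) ≃L[ℝ] EuclideanSpace ℝ (Fin n)).toContinuousLinearMap.comp (f'' z)) z := by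
    intro z hz
    have h1 : HasFDerivAt (fun w : EuclideanSpace ℝ (Fin n) => (InnerProductSpace.toDual ℝ (EuclideanSpace ℝ (Fin n))).symm (fderiv ℝ φ w))
        (((InnerProductSpace.toDual ℝ (EuclideanSpace ℝ (Fin n))).symm.toContinuousLinearEquiv :
          (EuclideanSpace ℝ (Fin n) →L[ℝ] ℝ) ≃L[ℝ] EuclideanSpace ℝ (Fin n)).toContinuousLinearMap.comp (f'' z)) z :=
      (((InnerProductSpace.toDual ℝ (EuclideanSpace ℝ (Fin n))).symm.toContinuousLinearEquiv :
          (EuclideanSpace ℝ (Fin n) →L[ℝ] ℝ) ≃L[ℝ] EuclideanSpace ℝ (Fin n)).toContinuousLinearMap.hasFDerivAt).comp z (hf''At z hz)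
    exact h1
  have hH : ∀ z ∈ s, HasFDerivAt (fun w => gradient φ w) (H z) z := by
    intro z hz
    show HasFDerivAt (fun w => gradient φ w) (fderiv ℝ (fun w => gradient φ w) z) z
    rw [(hgradAt z hz).fderiv]; exact hgradAt z hz
  have hinner : ∀ z ∈ s, ∀ v w : EuclideanSpace ℝ (Fin n), ⟪H z v, w⟫ = (f'' z v) w := by
    intro z hz v w
    show (inner ℝ ((fderiv ℝ (fun w => gradient φ w) z) v) w : ℝ) = _
    rw [(hgradAt z hz).fderiv]
    simp [InnerProductSpace.toDual_symm_apply]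
  have hsymm : ∀ z ∈ s, ∀ v w : EuclideanSpace ℝ (Fin n), ⟪H z v, w⟫ = ⟪H z w, v⟫ := by
    intro z hz v w
    rw [hinner z hz v w, hinner z hz w v]
    apply second_derivative_symmetric_of_eventually_of_real
    · filter_upwards [hs.mem_nhds hz] with a ha
      exact ((hφdiff a ha).differentiableAt (hs.mem_nhds ha)).hasFDerivAt
    · exact hf''At z hz
  have hpos : ∀ z ∈ s, ∀ v : EuclideanSpace ℝ (Fin n), 0 ≤ ⟪H z v, v⟫ := by
    intro z hz v
    obtain ⟨δ, δpos, hδ⟩ : ∃ δ > 0, ∀ t : ℝ, |t| < δ → z + t • v ∈ s := by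
      have hc : Continuous (fun t : ℝ => z + t • v) := continuous_const.add (continuous_id.smul continuous_const)
      have hop : IsOpen ((fun t : ℝ => z + t • v) ⁻¹' s) := hs.preimage hc
      obtain ⟨δ, δpos, hδ⟩ := Metric.isOpen_iff.1 hop 0 (by simp [hz])
      exact ⟨δ, δpos, fun t ht => hδ (by simpa [Real.dist_eq] using ht)⟩
    have hSsub : ∀ t ∈ Set.Ioo (-δ) δ, z + t • v ∈ s :=
      fun t ht => hδ t (abs_lt.2 ⟨ht.1, ht.2⟩)
    have hψconv : ConvexOn ℝ (Set.Ioo (-δ) δ) (fun t : ℝ => φ (z + t • v)) := by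
      refine ⟨convex_Ioo _ _, fun t1 ht1 t2 ht2 a b ha hb hab => ?_⟩
      have h1 := hconv.2 (hSsub t1 ht1) (hSsub t2 ht2) ha hb hab
      have he : z + (a * t1 + b * t2) • v = a • (z + t1 • v) + b • (z + t2 • v) := by
        rw [add_smul, mul_smul, mul_smul, smul_add, smul_add, ← add_assoc]
        rw [show a • z + a • t1 • v + (b • z + b • t2 • v)
            = (a • z + b • z) + (a • t1 • v + b • t2 • v) by abel, ← add_smul, hab, one_smul]
        abel
      simpa [smul_eq_mul, he] using h1
    have hψd : ∀ t ∈ Set.Ioo (-δ) δ,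
        HasDerivAt (fun r : ℝ => φ (z + r • v)) ⟪gradient φ (z + t • v), v⟫ t := by
      intro t ht
      have h1 : HasFDerivAt φ (fderiv ℝ φ (z + t • v)) (z + t • v) :=
        ((hφdiff _ (hSsub t ht)).differentiableAt (hs.mem_nhds (hSsub t ht))).hasFDerivAt
      have h2 : HasDerivAt (fun r : ℝ => z + r • v) v t := by
        simpa using ((hasDerivAt_id t).smul_const v).const_add z
      have h3 := h1.comp_hasDerivAt t h2
      have he : ⟪gradient φ (z + t • v), v⟫ = fderiv ℝ φ (z + t • v) v := by
        simp [gradient, InnerProductSpace.toDual_symm_apply]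
      rw [he]; exact h3
    have hmono := hψconv.monotoneOn_deriv
      (fun t ht => (hψd t ht).differentiableAt)
    have hq : HasDerivAt (fun t : ℝ => ⟪gradient φ (z + t • v), v⟫) ⟪H z v, v⟫ 0 := by
      have h2 : HasDerivAt (fun r : ℝ => z + r • v) v 0 := by
        simpa using ((hasDerivAt_id (0:ℝ)).smul_const v).const_add z
      have h3 : HasFDerivAt (fun w => gradient φ w) (H z) (z + (0:ℝ) • v) := by
        simpa using hH z hz
      have h4 : HasDerivAt (fun t : ℝ => gradient φ (z + t • v)) (H z v) 0 :=
        by have := h3.comp_hasDerivAt 0 h2; exact this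
      simpa using h4.inner ℝ (hasDerivAt_const (0:ℝ) v)
    have hqW : HasDerivWithinAt (fun t : ℝ => ⟪gradient φ (z + t • v), v⟫)
        ⟪H z v, v⟫ (Set.Ioi 0) 0 := hq.hasDerivWithinAt
    rw [hasDerivWithinAt_iff_tendsto_slope] at hqW
    have hIoi : Set.Ioi (0:ℝ) \ {0} = Set.Ioi 0 :=
      Set.diff_singleton_eq_self (by simp)
    rw [hIoi] at hqW
    refine ge_of_tendsto hqW ?_
    have hmem : Set.Ioo (0:ℝ) δ ∈ nhdsWithin (0:ℝ) (Set.Ioi 0) :=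
      Ioo_mem_nhdsGT_of_mem ⟨le_refl _, δpos⟩
    filter_upwards [hmem, self_mem_nhdsWithin] with t ht ht'
    have h0S : (0:ℝ) ∈ Set.Ioo (-δ) δ := by constructor <;> simp [δpos] <;> linarith
    have htS : t ∈ Set.Ioo (-δ) δ := ⟨by linarith [ht.1], ht.2⟩
    have hd0 : deriv (fun r : ℝ => φ (z + r • v)) 0 = ⟪gradient φ (z + (0:ℝ) • v), v⟫ :=
      (hψd 0 h0S).deriv
    have hdt : deriv (fun r : ℝ => φ (z + r • v)) t = ⟪gradient φ (z + t • v), v⟫ :=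
      (hψd t htS).deriv
    have hle := hmono h0S htS (le_of_lt ht.1)
    rw [hd0, hdt] at hle
    rw [slope_def_field]
    apply div_nonneg _ (by simpa using le_of_lt ht.1)
    simpa using sub_nonneg.2 hle
  set u : EuclideanSpace ℝ (Fin n) := x - y with hu
  set g : EuclideanSpace ℝ (Fin n) := gradient φ x - gradient φ y with hgdef
  have hgradC1 : ContDiffOn ℝ 1 (fun w => gradient φ w) s := by
    have h1' : ContDiffOn ℝ 1 (fun w : EuclideanSpace ℝ (Fin n) =>
        ((InnerProductSpace.toDual ℝ (EuclideanSpace ℝ (Fin n))).symm.toContinuousLinearEquiv :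
          (EuclideanSpace ℝ (Fin n) →L[ℝ] ℝ) ≃L[ℝ] EuclideanSpace ℝ (Fin n)).toContinuousLinearMap
          (fderiv ℝ φ w)) s :=
      (((InnerProductSpace.toDual ℝ (EuclideanSpace ℝ (Fin n))).symm.toContinuousLinearEquiv :
          (EuclideanSpace ℝ (Fin n) →L[ℝ] ℝ) ≃L[ℝ] EuclideanSpace ℝ (Fin n)).toContinuousLinearMap.contDiff).comp_contDiffOn hf1
    exact h1'
  have hHcont : ContinuousOn H s :=
    hgradC1.continuousOn_fderiv_of_isOpen hs (le_refl 1)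
  have hγseg : ∀ t ∈ Set.Icc (0:ℝ) 1, y + t • u ∈ segment ℝ x y := by
    intro t ht
    rw [segment_symm]
    exact ⟨1 - t, t, by linarith [ht.2], ht.1, by linarith, by rw [hu]; module⟩
  have hγs : ∀ t ∈ Set.Icc (0:ℝ) 1, y + t • u ∈ s := fun t ht => hseg (hγseg t ht)
  have hγcont : Continuous (fun t : ℝ => y + t • u) :=
    continuous_const.add (continuous_id.smul continuous_const)
  have huIcc : Set.uIcc (0:ℝ) 1 = Set.Icc 0 1 := Set.uIcc_of_le zero_le_one
  have hHγ : ContinuousOn (fun t : ℝ => H (y + t • u)) (Set.Icc 0 1) :=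
    hHcont.comp hγcont.continuousOn (fun t ht => hγs t ht)
  have hcontv : ∀ v : EuclideanSpace ℝ (Fin n),
      ContinuousOn (fun t : ℝ => H (y + t • u) v) (Set.Icc 0 1) := fun v =>
    (ContinuousLinearMap.apply ℝ (EuclideanSpace ℝ (Fin n)) v).continuous.comp_continuousOn hHγ
  have hintv : IntervalIntegrable (fun t : ℝ => H (y + t • u) u)
      MeasureTheory.volume 0 1 := by
    apply ContinuousOn.intervalIntegrable; rw [huIcc]; exact hcontv u
  have hibl : ∀ a b : EuclideanSpace ℝ (Fin n),
      IntervalIntegrable (fun t : ℝ => ⟪H (y + t • u) a, b⟫) MeasureTheory.volume 0 1 := by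
    intro a b
    apply ContinuousOn.intervalIntegrable; rw [huIcc]
    exact (hcontv a).inner continuousOn_const
  have hFTC : g = ∫ t in (0:ℝ)..1, H (y + t • u) u := by
    have hder : ∀ t ∈ Set.uIcc (0:ℝ) 1,
        HasDerivAt (fun t : ℝ => gradient φ (y + t • u)) (H (y + t • u) u) t := by
      intro t ht
      rw [huIcc] at ht
      have h2 : HasDerivAt (fun r : ℝ => y + r • u) u t := by
        simpa using ((hasDerivAt_id t).smul_const u).const_add y
      exact (hH _ (hγs t ht)).comp_hasDerivAt t h2
    have hF := intervalIntegral.integral_eq_sub_of_hasDerivAt hder hintv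
    rw [hF, show y + (1:ℝ) • u = x by rw [hu]; module, show y + (0:ℝ) • u = y by module]
  have hginner : ∀ w : EuclideanSpace ℝ (Fin n),
      ⟪g, w⟫ = ∫ t in (0:ℝ)..1, ⟪H (y + t • u) u, w⟫ := by
    intro w
    have hcc := (innerSL ℝ w).intervalIntegral_comp_comm hintv
    simp only [innerSL_apply_apply] at hcc
    rw [hFTC, real_inner_comm, ← hcc]
    simp_rw [real_inner_comm w]
  have hb : (∫ t in (0:ℝ)..1, ⟪H (y + t • u) u, g⟫) = ‖g‖^2 :=
    (hginner g).symm.trans (real_inner_self_eq_norm_sq g)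
  have hc : (∫ t in (0:ℝ)..1, ⟪H (y + t • u) u, u⟫) = ⟪g, u⟫ := (hginner u).symm
  have hcnn : 0 ≤ ⟪g, u⟫ := by
    rw [← hc]
    exact intervalIntegral.integral_nonneg zero_le_one (fun t ht => hpos _ (hγs t ht) u)
  have hquad : ∀ l : ℝ, 0 ≤ (∫ t in (0:ℝ)..1, ⟪H (y + t • u) g, g⟫) * (l * l)
      + (2 * ‖g‖^2) * l + ⟪g, u⟫ := by
    intro l
    have h0 : 0 ≤ ∫ t in (0:ℝ)..1, ⟪H (y + t • u) (l • g + u), l • g + u⟫ :=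
      intervalIntegral.integral_nonneg zero_le_one (fun t ht => hpos _ (hγs t ht) _)
    have heq : (∫ t in (0:ℝ)..1, ⟪H (y + t • u) (l • g + u), l • g + u⟫)
        = ∫ t in (0:ℝ)..1, ((l*l) * ⟪H (y + t • u) g, g⟫
            + (2*l) * ⟪H (y + t • u) u, g⟫ + ⟪H (y + t • u) u, u⟫) := by
      apply intervalIntegral.integral_congr
      intro t ht
      rw [huIcc] at ht
      have hsy := hsymm _ (hγs t ht) g u
      simp only [map_add, map_smul, inner_add_left, inner_add_right,
        real_inner_smul_left, real_inner_smul_right]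
      rw [hsy]
      ring
    rw [heq] at h0
    rw [intervalIntegral.integral_add (((hibl g g).const_mul _).add ((hibl u g).const_mul _))
        (hibl u u),
      intervalIntegral.integral_add ((hibl g g).const_mul _) ((hibl u g).const_mul _),
      intervalIntegral.integral_const_mul, intervalIntegral.integral_const_mul] at h0
    rw [hb, hc] at h0
    nlinarith [h0]
  have hdis := discrim_le_zero hquad
  rw [discrim] at hdis
  have hA : (∫ t in (0:ℝ)..1, ⟪H (y + t • u) g, g⟫) ≤ M * ‖g‖^2 := by
    have hmono2 := intervalIntegral.integral_mono_on zero_le_one (hibl g g)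
      (intervalIntegrable_const (c := M * ‖g‖^2)) (fun t ht => ?_)
    · simpa using hmono2
    · calc ⟪H (y + t • u) g, g⟫ ≤ ‖H (y + t • u) g‖ * ‖g‖ := real_inner_le_norm _ _
        _ ≤ (‖H (y + t • u)‖ * ‖g‖) * ‖g‖ :=
            mul_le_mul_of_nonneg_right ((H _).le_opNorm g) (norm_nonneg g)
        _ ≤ (M * ‖g‖) * ‖g‖ := by
            have hMb := hM _ (hγseg t ht)
            have := norm_nonneg g
            nlinarith
        _ = M * ‖g‖^2 := by ring
  have hM0 : 0 ≤ M := le_trans (norm_nonneg _) (hM x (left_mem_segment ℝ x y))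
  by_cases hg0 : g = 0
  · rw [hg0]
    simp [hM0]
  · have hgpos : 0 < ‖g‖^2 := by
      have := norm_pos_iff.2 hg0
      positivity
    nlinarith [mul_le_mul_of_nonneg_right hA hcnn, hdis, hgpos, hcnn, hM0]
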